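/- Diskcyclicity criterion: Let T be a bounded operator on a separable Hilbert space H. Suppose there exist dense subsets X, Y of H, a map S : Y → Y with TS = Id on Y, and a sequence {n_k} in ℕ such that ‖S^{n_k} y‖ → 0 for all y ∈ Y and ‖T^{n_k} x‖·‖S^{n_k} y‖ → 0 for all x ∈ X, y ∈ Y. Then T is diskcyclic. -/

import Mathlib

open Filter Topology Pointwise

/-- The disk orbit of `x` under `T`: `{α • Tⁿ x : n ≥ 0, α ∈ ℂ, |α| ≤ 1}`. -/
def diskOrbit {H : Type*} [NormedAddCommGroup H] [NormedSpace ℂ H]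
    (T : H →L[ℂ] H) (x : H) : Set H :=
  {y | ∃ (n : ℕ) (α : ℂ), ‖α‖ ≤ 1 ∧ y = α • (T ^ n) x}

/-- An operator is diskcyclic if some vector has dense disk orbit. -/
def DiskCyclic {H : Type*} [NormedAddCommGroup H] [NormedSpace ℂ H]
    (T : H →L[ℂ] H) : Prop :=
  ∃ x : H, Dense (diskOrbit T x)

theorem stmt9 {H : Type*} [NormedAddCommGroup H] [InnerProductSpace ℂ H] [CompleteSpace H]
    [TopologicalSpace.SeparableSpace H]
    (T : H →L[ℂ] H) (X Y : Set H) (hX : Dense X) (hY : Dense Y)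
    (S : H → H) (hSY : ∀ y ∈ Y, S y ∈ Y) (hTS : ∀ y ∈ Y, T (S y) = y)
    (n : ℕ → ℕ)
    (h1 : ∀ y ∈ Y, Filter.Tendsto (fun k => ‖S^[n k] y‖) Filter.atTop (nhds 0))
    (h2 : ∀ x ∈ X, ∀ y ∈ Y,
      Filter.Tendsto (fun k => ‖(T ^ n k) x‖ * ‖S^[n k] y‖) Filter.atTop (nhds 0)) :
    DiskCyclic T := by
  haveI : Nonempty H := ⟨0⟩
  -- iterated right inverse
  have hiter : ∀ y ∈ Y, ∀ m : ℕ, S^[m] y ∈ Y ∧ (T ^ m) (S^[m] y) = y := by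
    intro y hy m
    induction m with
    | zero => simpa using hy
    | succ m ih =>
      constructor
      · rw [Function.iterate_succ_apply']
        exact hSY _ ih.1
      · rw [Function.iterate_succ_apply', pow_succ, ContinuousLinearMap.mul_apply,
          hTS _ ih.1]
        exact ih.2
  -- the key approximation step
  have key : ∀ (u v : H), ∀ ε > (0:ℝ), ∃ z : H, dist z u < ε ∧
      ∃ (m : ℕ) (α : ℂ), ‖α‖ ≤ 1 ∧ dist (α • (T ^ m) z) v < ε := by
    intro u v ε hε
    obtain ⟨x, hxu, hxX⟩ := (Metric.dense_iff.1 hX) u (ε/2) (by positivity)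
    obtain ⟨y, hyv, hyY⟩ := (Metric.dense_iff.1 hY) v (ε/2) (by positivity)
    rw [Metric.mem_ball] at hxu hyv
    set a : ℕ → ℝ := fun k => ‖(T ^ n k) x‖ with ha
    set b : ℕ → ℝ := fun k => ‖S^[n k] y‖ with hb
    have hbnn : ∀ k, 0 ≤ b k := fun k => norm_nonneg _
    have hann : ∀ k, 0 ≤ a k := fun k => norm_nonneg _
    set c : ℕ → ℝ := fun k => a k * b k + 1 / (k + 1) with hc
    have hcpos : ∀ k, 0 < c k := by
      intro k
      have : (0:ℝ) < 1 / (k + 1) := by positivity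
      have := mul_nonneg (hann k) (hbnn k)
      simp only [hc]; linarith
    set s : ℕ → ℝ := fun k => Real.sqrt (c k) with hs
    have hspos : ∀ k, 0 < s k := fun k => Real.sqrt_pos.2 (hcpos k)
    set αr : ℕ → ℝ := fun k => s k / (a k + s k) with hαr
    have hαrpos : ∀ k, 0 < αr k := fun k =>
      div_pos (hspos k) (by linarith [hann k, hspos k])
    have hαrle : ∀ k, αr k ≤ 1 := by
      intro k
      rw [hαr, div_le_one (by linarith [hann k, hspos k])]
      linarith [hann k]
    -- bound 1 : αr k * a k ≤ s k
    have hbd1 : ∀ k, αr k * a k ≤ s k := by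
      intro k
      have hd : 0 < a k + s k := by linarith [hann k, hspos k]
      rw [hαr, div_mul_eq_mul_div, div_le_iff₀ hd]
      have : a k ≤ a k + s k := by linarith [hspos k]
      calc s k * a k ≤ s k * (a k + s k) := by
            exact mul_le_mul_of_nonneg_left this (le_of_lt (hspos k))
        _ = s k * (a k + s k) := rfl
    -- bound 2 : b k / αr k ≤ s k + b k
    have hbd2 : ∀ k, b k / αr k ≤ s k + b k := by
      intro k
      have hd : 0 < a k + s k := by linarith [hann k, hspos k]
      rw [hαr, div_div_eq_mul_div, div_le_iff₀ (hspos k)]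
      have hab : a k * b k ≤ s k * s k := by
        have hss : s k * s k = c k := Real.mul_self_sqrt (hcpos k).le
        rw [hss, hc]
        have : (0:ℝ) < 1 / (k + 1) := by positivity
        simp only
        linarith
      calc b k * (a k + s k) = a k * b k + b k * s k := by ring
        _ ≤ s k * s k + b k * s k := by linarith
        _ = (s k + b k) * s k := by ring
    -- limits
    have hab0 : Tendsto (fun k => a k * b k) atTop (nhds 0) := h2 x hxX y hyY
    have hc0 : Tendsto c atTop (nhds 0) := by
      have := hab0.add tendsto_one_div_add_atTop_nhds_zero_nat
      show Tendsto (fun k : ℕ => a k * b k + 1 / (k + 1)) atTop (nhds 0)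
      simpa [one_div] using this
    have hs0 : Tendsto s atTop (nhds 0) := by
      have := (Real.continuous_sqrt.tendsto 0).comp hc0
      simpa [hs, Function.comp_def] using this
    have hb0 : Tendsto b atTop (nhds 0) := h1 y hyY
    have hαa0 : Tendsto (fun k => αr k * a k) atTop (nhds 0) := by
      apply squeeze_zero (fun k => mul_nonneg (hαrpos k).le (hann k)) hbd1 hs0
    have hbα0 : Tendsto (fun k => b k / αr k) atTop (nhds 0) := by
      apply squeeze_zero (fun k => div_nonneg (hbnn k) (hαrpos k).le) hbd2
      simpa using hs0.add hb0
    -- the approximating vectors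
    set α : ℕ → ℂ := fun k => (αr k : ℂ) with hα
    have hαne : ∀ k, α k ≠ 0 := by
      intro k
      simp [hα, Complex.ofReal_eq_zero, (hαrpos k).ne']
    set z : ℕ → H := fun k => x + (α k)⁻¹ • S^[n k] y with hz
    have hzx : Tendsto (fun k => dist (z k) x) atTop (nhds 0) := by
      have heq : ∀ k, dist (z k) x = b k / αr k := by
        intro k
        rw [hz]
        simp only [dist_eq_norm, add_sub_cancel_left, norm_smul, norm_inv]
        rw [hα, Complex.norm_real, Real.norm_eq_abs, abs_of_pos (hαrpos k)]
        rw [div_eq_inv_mul]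
      simpa only [heq] using hbα0
    have horb : Tendsto (fun k => dist ((α k) • (T ^ n k) (z k)) y) atTop (nhds 0) := by
      have heq : ∀ k, dist ((α k) • (T ^ n k) (z k)) y = αr k * a k := by
        intro k
        have : (α k) • (T ^ n k) (z k) = (α k) • (T ^ n k) x + y := by
          rw [hz]
          rw [map_add, map_smul, smul_add, smul_inv_smul₀ (hαne k),
            (hiter y hyY (n k)).2]
        rw [this, dist_eq_norm, add_sub_cancel_right, norm_smul, hα,
          Complex.norm_real, Real.norm_eq_abs, abs_of_pos (hαrpos k)]
      simpa only [heq] using hαa0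
    -- pick a good k
    have h1' := (hzx.eventually (eventually_lt_nhds (by positivity : (0:ℝ) < ε/2)))
    have h2' := (horb.eventually (eventually_lt_nhds (by positivity : (0:ℝ) < ε/2)))
    obtain ⟨k, hk1, hk2⟩ := (h1'.and h2').exists
    refine ⟨z k, ?_, n k, α k, ?_, ?_⟩
    · calc dist (z k) u ≤ dist (z k) x + dist x u := dist_triangle _ _ _
        _ < ε/2 + ε/2 := add_lt_add hk1 hxu
        _ = ε := by ring
    · rw [hα, Complex.norm_real, Real.norm_eq_abs, abs_of_pos (hαrpos k)]
      exact hαrle k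
    · calc dist ((α k) • (T ^ n k) (z k)) v
          ≤ dist ((α k) • (T ^ n k) (z k)) y + dist y v := dist_triangle _ _ _
        _ < ε/2 + ε/2 := add_lt_add hk2 hyv
        _ = ε := by ring
  -- Baire category argument
  set d : ℕ → H := TopologicalSpace.denseSeq H with hd
  have hdd : DenseRange d := TopologicalSpace.denseRange_denseSeq H
  set G : ℕ × ℕ → Set H := fun p =>
    {w | ∃ (m : ℕ) (α : ℂ), ‖α‖ ≤ 1 ∧ dist (α • (T ^ m) w) (d p.1) < 1 / (p.2 + 1)}
    with hG
  have hGopen : ∀ p, IsOpen (G p) := by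
    intro p
    have : G p = ⋃ (m : ℕ), ⋃ (α : ℂ), ⋃ (_ : ‖α‖ ≤ 1),
        (fun w => α • (T ^ m) w) ⁻¹' Metric.ball (d p.1) (1 / (p.2 + 1)) := by
      ext w
      simp only [hG, Set.mem_setOf_eq, Set.mem_iUnion, Set.mem_preimage, Metric.mem_ball]
      tauto
    rw [this]
    exact isOpen_iUnion fun m => isOpen_iUnion fun α => isOpen_iUnion fun _ =>
      Metric.isOpen_ball.preimage (((T ^ m).continuous).const_smul α)
  have hGdense : ∀ p, Dense (G p) := by
    intro p
    rw [Metric.dense_iff]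
    intro w r hr
    have hδ : (0:ℝ) < 1 / (p.2 + 1) := by positivity
    obtain ⟨z, hz1, m, α, hα, hz2⟩ := key w (d p.1) (min r (1 / (p.2 + 1)))
      (lt_min hr hδ)
    exact ⟨z, Metric.mem_ball.2 (lt_of_lt_of_le hz1 (min_le_left _ _)),
      m, α, hα, lt_of_lt_of_le hz2 (min_le_right _ _)⟩
  have hdense : Dense (⋂ p, G p) := dense_iInter_of_isOpen hGopen hGdense
  obtain ⟨x₀, hx₀⟩ := hdense.nonempty
  refine ⟨x₀, ?_⟩
  rw [Metric.dense_iff]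
  intro w r hr
  obtain ⟨j, hj⟩ := Metric.denseRange_iff.1 hdd w (r/2) (by positivity)
  obtain ⟨m, hm⟩ := exists_nat_one_div_lt (by positivity : (0:ℝ) < r/2)
  have hx₀jm : x₀ ∈ G (j, m) := Set.mem_iInter.1 hx₀ (j, m)
  obtain ⟨m', α, hα, hdist⟩ := hx₀jm
  refine ⟨α • (T ^ m') x₀, Metric.mem_ball.2 ?_, m', α, hα, rfl⟩
  calc dist (α • (T ^ m') x₀) w ≤ dist (α • (T ^ m') x₀) (d j) + dist (d j) w :=
        dist_triangle _ _ _
    _ < 1 / (m + 1) + r/2 := add_lt_add hdist (by rwa [dist_comm] at hj)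
    _ < r/2 + r/2 := by linarith
    _ = r := by ring
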